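/- Let L be a finite relational first-order language (L has no function or constant symbols and only finitely many relation symbols). Let I be a set, let p be an ultrafilter on I, and let (M_i)_{i∈I} be a family of ultrahomogeneous L-structures. Then the ultraproduct (∏_{i∈I} M_i)/p is ultrahomogeneous. -/
import Mathlib

open FirstOrder Language Cardinal CategoryTheory Filter

open FirstOrder.Language.Structure

private lemma ultra_iff_aux {I : Type} {u : Ultrafilter I} {P Q : I → Prop}
    (h : (∀ᶠ i in (u : Filter I), P i) ↔ ∀ᶠ i in (u : Filter I), Q i) :
    ∀ᶠ i in (u : Filter I), (P i ↔ Q i) := by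
  by_cases hp : ∀ᶠ i in (u : Filter I), P i
  · filter_upwards [hp, h.mp hp] with i h1 h2 using iff_of_true h1 h2
  · have h1 := Ultrafilter.eventually_not.2 hp
    have h2 := Ultrafilter.eventually_not.2 (fun hq => hp (h.mpr hq))
    filter_upwards [h1, h2] with i h1 h2 using iff_of_false h1 h2

private lemma extend_aux {L : FirstOrder.Language.{0,0}} [L.IsRelational] {A : Type}
    [L.Structure A] (hA : L.IsUltrahomogeneous A) {S : Type} [Finite S] (u w : S → A)
    (hu : Function.Injective u) (hw : Function.Injective w)
    (hrel : ∀ (rv : Σ n, L.Relations n) (v : Fin rv.1 → S),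
      RelMap rv.2 (fun k => u (v k)) ↔ RelMap rv.2 (fun k => w (v k))) :
    ∃ g : A ≃[L] A, ∀ x, g (u x) = w x := by
  classical
  set T : L.Substructure A := Substructure.closure L (Set.range u) with hT
  have hmem : ∀ m : A, m ∈ T → ∃ x, u x = m := fun m hm =>
    (Substructure.mem_closure_iff_of_isRelational L (Set.range u) m).mp hm
  choose idx hidx using fun t : T => hmem t t.2
  have einj : Function.Injective fun t : T => w (idx t) := by
    intro t t' h
    apply Subtype.ext
    rw [← hidx t, ← hidx t', hw h]
  let e : T ↪[L] A :=
    { toFun := fun t => w (idx t)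
      inj' := einj
      map_fun' := fun {n} F _ => isEmptyElim F
      map_rel' := by
        intro n r v
        have h2 := hrel ⟨n, r⟩ (fun k => idx (v k))
        have h1 : (fun k => u (idx (v k))) = fun k => ((v k : A)) := funext fun k => hidx (v k)
        rw [h1] at h2
        exact h2.symm.trans (T.subtype.map_rel r v) }
  obtain ⟨g, hg⟩ := hA T (Substructure.fg_closure (Set.finite_range u)) e
  refine ⟨g, fun x => ?_⟩
  have hxT : u x ∈ T := Substructure.subset_closure (Set.mem_range_self x)
  have h3 : e ⟨u x, hxT⟩ = g (u x) := by rw [hg]; rfl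
  rw [← h3]
  show w (idx ⟨u x, hxT⟩) = w x
  congr 1
  exact hu (hidx ⟨u x, hxT⟩)

/-- In a finite relational language, any ultraproduct of ultrahomogeneous
structures is ultrahomogeneous. -/
theorem statement5 (L : FirstOrder.Language.{0, 0}) [L.IsRelational] [Finite L.Symbols]
    {I : Type} (p : Ultrafilter I) (M : I → Type) [∀ i, L.Structure (M i)]
    (hM : ∀ i, L.IsUltrahomogeneous (M i)) :
    L.IsUltrahomogeneous ((p : Filter I).Product M) := by
  classical
  intro S hS f
  letI s : Setoid (∀ i, M i) := (p : Filter I).productSetoid M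
  haveI hSfin : Finite S := Substructure.fg_iff_finite.mp hS
  haveI : Finite (Σ n, L.Relations n) :=
    Finite.of_injective (fun x => (Sum.inr x : L.Symbols)) Sum.inr_injective
  choose a ha using fun x : S => Quotient.exists_rep ((S.subtype x) : (p : Filter I).Product M)
  choose b hb using fun x : S => Quotient.exists_rep (f x)
  -- injectivity coordinatewise, eventually
  have hinjev : ∀ x y : S, ∀ᶠ i in (p : Filter I),
      (x ≠ y → (a x i ≠ a y i ∧ b x i ≠ b y i)) := by
    intro x y
    by_cases hxy : x = y
    · exact Filter.Eventually.of_forall fun i h => absurd hxy h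
    · have h1 : ¬ (∀ᶠ i in (p : Filter I), a x i = a y i) := by
        intro h
        have : (⟦a x⟧ : (p : Filter I).Product M) = ⟦a y⟧ := Quotient.sound h
        rw [ha x, ha y] at this
        exact hxy (S.subtype.injective this)
      have h2 : ¬ (∀ᶠ i in (p : Filter I), b x i = b y i) := by
        intro h
        have : (⟦b x⟧ : (p : Filter I).Product M) = ⟦b y⟧ := Quotient.sound h
        rw [hb x, hb y] at this
        exact hxy (f.injective this)
      filter_upwards [Ultrafilter.eventually_not.2 h1, Ultrafilter.eventually_not.2 h2]
        with i h1 h2 using fun _ => ⟨h1, h2⟩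
  -- relations coordinatewise, eventually
  have hrelev : ∀ (rv : Σ n, L.Relations n) (v : Fin rv.1 → S), ∀ᶠ i in (p : Filter I),
      (RelMap rv.2 (fun k => a (v k) i) ↔ RelMap rv.2 (fun k => b (v k) i)) := by
    rintro ⟨n, r⟩ v
    apply ultra_iff_aux
    have h1 : (RelMap r fun k => (⟦a (v k)⟧ : (p : Filter I).Product M)) ↔
        ∀ᶠ i in (p : Filter I), RelMap r fun k => a (v k) i := relMap_quotient_mk' _ _ _
    have h2 : (RelMap r fun k => (⟦b (v k)⟧ : (p : Filter I).Product M)) ↔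
        ∀ᶠ i in (p : Filter I), RelMap r fun k => b (v k) i := relMap_quotient_mk' _ _ _
    rw [← h1, ← h2]
    simp only [ha, hb]
    have h3 : (RelMap r fun k => S.subtype (v k)) ↔ RelMap r v := S.subtype.map_rel r v
    have h4 : (RelMap r fun k => f (v k)) ↔ RelMap r v := f.map_rel r v
    exact h3.trans h4.symm
  have key : ∀ᶠ i in (p : Filter I),
      ((∀ x y : S, x ≠ y → (a x i ≠ a y i ∧ b x i ≠ b y i)) ∧
       (∀ (rv : Σ n, L.Relations n) (v : Fin rv.1 → S),
        (RelMap rv.2 (fun k => a (v k) i) ↔ RelMap rv.2 (fun k => b (v k) i)))) := by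
    rw [eventually_and]
    constructor
    · rw [eventually_all]; intro x; rw [eventually_all]; intro y; exact hinjev x y
    · rw [eventually_all]; intro rv; rw [eventually_all]; intro v; exact hrelev rv v
  -- pointwise automorphisms
  have hgi : ∀ i : I, ∃ g : M i ≃[L] M i,
      ((∀ x y : S, x ≠ y → (a x i ≠ a y i ∧ b x i ≠ b y i)) ∧
       (∀ (rv : Σ n, L.Relations n) (v : Fin rv.1 → S),
        (RelMap rv.2 (fun k => a (v k) i) ↔ RelMap rv.2 (fun k => b (v k) i)))) →
      ∀ x : S, g (a x i) = b x i := by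
    intro i
    by_cases hC : ((∀ x y : S, x ≠ y → (a x i ≠ a y i ∧ b x i ≠ b y i)) ∧
       (∀ (rv : Σ n, L.Relations n) (v : Fin rv.1 → S),
        (RelMap rv.2 (fun k => a (v k) i) ↔ RelMap rv.2 (fun k => b (v k) i))))
    · have hu : Function.Injective (fun x : S => a x i) := by
        intro x y hxy
        by_contra hne
        exact (hC.1 x y hne).1 hxy
      have hw : Function.Injective (fun x : S => b x i) := by
        intro x y hxy
        by_contra hne
        exact (hC.1 x y hne).2 hxy
      obtain ⟨g, hg⟩ := extend_aux (hM i) _ _ hu hw (fun rv v => hC.2 rv v)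
      exact ⟨g, fun _ x => hg x⟩
    · exact ⟨FirstOrder.Language.Equiv.refl L (M i), fun h => absurd h hC⟩
  choose g hg using hgi
  have resp : ∀ (F : ∀ j, M j → M j) (h h' : ∀ i, M i),
      (∀ᶠ i in (p : Filter I), h i = h' i) →
      (∀ᶠ i in (p : Filter I), F i (h i) = F i (h' i)) := fun F h h' hh => by
    filter_upwards [hh] with i e using by rw [e]
  let Gfun : (p : Filter I).Product M → (p : Filter I).Product M :=
    Quotient.map (fun h i => g i (h i)) (resp fun i => g i)
  let Ginv : (p : Filter I).Product M → (p : Filter I).Product M :=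
    Quotient.map (fun h i => (g i).symm (h i)) (resp fun i => (g i).symm)
  refine ⟨⟨⟨Gfun, Ginv, ?_, ?_⟩, fun {n} F _ => isEmptyElim F, ?_⟩, ?_⟩
  · intro q
    refine Quotient.inductionOn q fun h => ?_
    exact Quotient.sound (Filter.Eventually.of_forall fun i => (g i).symm_apply_apply (h i))
  · intro q
    refine Quotient.inductionOn q fun h => ?_
    exact Quotient.sound (Filter.Eventually.of_forall fun i => (g i).apply_symm_apply (h i))
  · intro n r x
    choose c hc using fun k => Quotient.exists_rep (x k)
    have hx : x = fun k => ⟦c k⟧ := funext fun k => (hc k).symm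
    rw [hx]
    refine Iff.trans (Iff.trans (relMap_quotient_mk' _ _ _)
      (eventually_congr (Filter.Eventually.of_forall fun i =>
        (g i).map_rel r fun k => c k i))) (relMap_quotient_mk' s r c).symm
  · ext x
    show f x = Gfun (S.subtype x)
    rw [← ha x, ← hb x]
    exact (Quotient.sound (by filter_upwards [key] with i hC using (hg i hC x))).symm
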